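/- Fix η > 2 and let ψ(x) = (1 − η)x − ηx³ be the gradient descent map with step size η on f_+(x) = x²/2 + x⁴/4. For any x_0 ≠ 0, the iterates x_{t+1} = ψ(x_t) satisfy |x_t|^{1/t} → ∞ as t → ∞, i.e., the iterates diverge at a superlinear (super-geometric) rate. -/

import Mathlib

/-- **Superlinear divergence of GD on `f₊(x) = x²/2 + x⁴/4` for `η > 2`.**
The GD map is `ψ(x) = x - η f₊'(x) = (1 - η) x - η x³`. For any `x₀ ≠ 0`,
the iterates satisfy `|x_t|^(1/t) → ∞`. -/
theorem stmt7 (η : ℝ) (hη : 2 < η) (x : ℕ → ℝ) (hx0 : x 0 ≠ 0)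
    (hstep : ∀ t, x (t + 1) = (1 - η) * x t - η * (x t) ^ 3) :
    Filter.Tendsto (fun t : ℕ => |x t| ^ (1 / (t : ℝ))) Filter.atTop Filter.atTop := by
  have hη1 : 1 < η - 1 := by linarith
  have hfac : ∀ t, 0 < (η - 1) + η * (x t) ^ 2 := by
    intro t; nlinarith [sq_nonneg (x t)]
  have habs : ∀ t, |x (t + 1)| = ((η - 1) + η * (x t) ^ 2) * |x t| := by
    intro t
    have h1 : x (t + 1) = -(((η - 1) + η * (x t) ^ 2) * x t) := by rw [hstep]; ring
    rw [h1, abs_neg, abs_mul, abs_of_pos (hfac t)]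
  have hpos : ∀ t, 0 < |x t| := by
    intro t
    induction t with
    | zero => exact abs_pos.mpr hx0
    | succ n ih => rw [habs]; exact mul_pos (hfac n) ih
  -- geometric lower bound
  have hgrow : ∀ t, (η - 1) ^ t * |x 0| ≤ |x t| := by
    intro t
    induction t with
    | zero => simp
    | succ n ih =>
      rw [habs, pow_succ]
      have h1 : (η - 1) * |x n| ≤ ((η - 1) + η * (x n) ^ 2) * |x n| := by
        nlinarith [mul_nonneg (mul_nonneg (by linarith : (0:ℝ) ≤ η) (sq_nonneg (x n))) (hpos n).le]
      calc (η - 1) ^ n * (η - 1) * |x 0| = (η - 1) * ((η - 1) ^ n * |x 0|) := by ring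
        _ ≤ (η - 1) * |x n| := mul_le_mul_of_nonneg_left ih (by linarith)
        _ ≤ _ := h1
  have hunbdd : ∀ M : ℝ, ∃ T, M ≤ |x T| := by
    intro M
    obtain ⟨n, hn⟩ := pow_unbounded_of_one_lt (M / |x 0|) hη1
    refine ⟨n, ?_⟩
    have h0 := hpos 0
    have h : M / |x 0| * |x 0| ≤ (η - 1) ^ n * |x 0| :=
      mul_le_mul_of_nonneg_right hn.le h0.le
    rw [div_mul_cancel₀ _ h0.ne'] at h
    exact h.trans (hgrow n)
  -- squaring step: once ≥ 1, squares each step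
  have hsq : ∀ t, 1 ≤ |x t| → |x t| ^ 2 ≤ |x (t + 1)| := by
    intro t ht
    rw [habs]
    have h1 : |x t| ≤ (η - 1) + η * (x t) ^ 2 := by
      nlinarith [sq_abs (x t), sq_nonneg (x t)]
    calc |x t| ^ 2 = |x t| * |x t| := by ring
      _ ≤ ((η - 1) + η * (x t) ^ 2) * |x t| :=
          mul_le_mul_of_nonneg_right h1 (hpos t).le
  have hiter : ∀ T, 1 ≤ |x T| → ∀ s, |x T| ^ (2 ^ s) ≤ |x (T + s)| := by
    intro T hT s
    induction s with
    | zero => simp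
    | succ n ih =>
      have h1 : 1 ≤ |x (T + n)| := le_trans (one_le_pow₀ hT) ih
      have h2 := hsq (T + n) h1
      have h3 : (|x T| ^ (2 ^ n)) ^ 2 ≤ |x (T + n)| ^ 2 :=
        pow_le_pow_left₀ (by positivity) ih 2
      rw [← pow_mul] at h3
      have h4 : |x T| ^ (2 ^ (n + 1)) = |x T| ^ (2 ^ n * 2) := by ring_nf
      rw [h4, show T + (n + 1) = (T + n) + 1 from rfl]
      exact h3.trans h2
  -- main argument
  rw [Filter.tendsto_atTop]
  intro b
  set C : ℝ := max b 1 with hC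
  have hC1 : 1 ≤ C := le_max_right _ _
  have hbC : b ≤ C := le_max_left _ _
  obtain ⟨T, hT⟩ := hunbdd (C ^ 2)
  have hT1 : 1 ≤ |x T| := le_trans (one_le_pow₀ hC1) hT
  rw [Filter.eventually_atTop]
  refine ⟨max (2 * T) 1, fun t ht => ?_⟩
  have ht1 : 1 ≤ t := le_trans (le_max_right _ _) ht
  have ht2 : 2 * T ≤ t := le_trans (le_max_left _ _) ht
  set s := t - T with hs
  have hts : t = T + s := by omega
  -- exponent bound : t ≤ 2^(s+1)
  have hexp : t ≤ 2 ^ (s + 1) := by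
    have h1 : s < 2 ^ s := Nat.lt_two_pow_self
    have h2 : 2 ^ (s + 1) = 2 * 2 ^ s := by ring
    omega
  -- C^t ≤ |x t|
  have hCt : C ^ t ≤ |x t| := by
    calc C ^ t ≤ C ^ (2 ^ (s + 1)) := pow_le_pow_right₀ hC1 hexp
      _ = (C ^ 2) ^ (2 ^ s) := by rw [← pow_mul]; ring_nf
      _ ≤ |x T| ^ (2 ^ s) := pow_le_pow_left₀ (by positivity) hT _
      _ ≤ |x (T + s)| := hiter T hT1 s
      _ = |x t| := by rw [← hts]
  have htR : (0:ℝ) < t := by exact_mod_cast ht1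
  calc b ≤ C := hbC
    _ = (C ^ (t : ℝ)) ^ (1 / (t : ℝ)) := by
        rw [← Real.rpow_mul (by linarith : (0:ℝ) ≤ C), mul_one_div, div_self htR.ne',
          Real.rpow_one]
    _ ≤ |x t| ^ (1 / (t : ℝ)) :=
        Real.rpow_le_rpow (by positivity) (by rw [Real.rpow_natCast]; exact hCt) (by positivity)
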